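/- Magnitude of finite Euclidean point sets is not submodular: let Ω = {(1,0),(0,1),(−1,0),(2,0)} ⊂ ℝ² with Euclidean distance, X = {(1,0),(0,1)}, x₁ = (−1,0), x₂ = (2,0), and define Mag(S) = 1ᵀ Z_S⁻¹ 1 where Z_S = exp[−d] is the similarity matrix of S at scale t = 1. Then Mag(X ∪ {x₁}) + Mag(X ∪ {x₂}) < Mag(X ∪ {x₁,x₂}) + Mag(X). -/

import Mathlib

set_option maxHeartbeats 1600000

open Matrix
noncomputable def Mag {k : ℕ} (pts : Fin k → ℝ × ℝ) : ℝ :=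
  ∑ i, ∑ j,
    (Matrix.of fun i j : Fin k =>
      Real.exp (-Real.sqrt (((pts i).1 - (pts j).1) ^ 2 + ((pts i).2 - (pts j).2) ^ 2)))⁻¹ i j

lemma magHelper {k : ℕ} (A : Matrix (Fin k) (Fin k) ℝ) (w : Fin k → ℝ)
    (hdet : A.det ≠ 0) (hw : A *ᵥ w = fun _ => 1) :
    ∑ i, ∑ j, A⁻¹ i j = ∑ i, w i := by
  have h1 : A⁻¹ *ᵥ (fun _ => (1:ℝ)) = w := by
    rw [← hw, Matrix.mulVec_mulVec, Matrix.nonsing_inv_mul _ (isUnit_iff_ne_zero.mpr hdet),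
      Matrix.one_mulVec]
  calc ∑ i, ∑ j, A⁻¹ i j = ∑ i, (A⁻¹ *ᵥ fun _ => (1:ℝ)) i := by
        simp [Matrix.mulVec, dotProduct]
    _ = ∑ i, w i := by rw [h1]

lemma magOf {k : ℕ} (pts : Fin k → ℝ × ℝ) (M : Matrix (Fin k) (Fin k) ℝ)
    (hM : ∀ i j, Real.exp (-Real.sqrt (((pts i).1 - (pts j).1) ^ 2 +
      ((pts i).2 - (pts j).2) ^ 2)) = M i j) :
    Mag pts = ∑ i, ∑ j, M⁻¹ i j := by
  have h : (Matrix.of fun i j : Fin k =>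
      Real.exp (-Real.sqrt (((pts i).1 - (pts j).1) ^ 2 + ((pts i).2 - (pts j).2) ^ 2))) = M := by
    ext i j; exact hM i j
  unfold Mag; rw [h]

lemma sqrt2_lb : (35355339/25000000 : ℝ) ≤ Real.sqrt 2 := by
  nlinarith [Real.sq_sqrt (show (0:ℝ) ≤ 2 by norm_num), Real.sqrt_nonneg 2,
    sq_nonneg (Real.sqrt 2 - 35355339/25000000), sq_nonneg (Real.sqrt 2 + 35355339/25000000)]

lemma sqrt2_ub : Real.sqrt 2 ≤ (141421357/100000000 : ℝ) := by
  nlinarith [Real.sq_sqrt (show (0:ℝ) ≤ 2 by norm_num), Real.sqrt_nonneg 2,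
    sq_nonneg (Real.sqrt 2 - 141421357/100000000), sq_nonneg (Real.sqrt 2 + 141421357/100000000)]

lemma sqrt5_lb : (223606797/100000000 : ℝ) ≤ Real.sqrt 5 := by
  nlinarith [Real.sq_sqrt (show (0:ℝ) ≤ 5 by norm_num), Real.sqrt_nonneg 5,
    sq_nonneg (Real.sqrt 5 - 223606797/100000000), sq_nonneg (Real.sqrt 5 + 223606797/100000000)]

lemma sqrt5_ub : Real.sqrt 5 ≤ (111803399/50000000 : ℝ) := by
  nlinarith [Real.sq_sqrt (show (0:ℝ) ≤ 5 by norm_num), Real.sqrt_nonneg 5,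
    sq_nonneg (Real.sqrt 5 - 111803399/50000000), sq_nonneg (Real.sqrt 5 + 111803399/50000000)]

lemma expA_ub : Real.exp (-Real.sqrt 2) ≤ 12155836861/50000000000 := by
  have hS : (50702874251/25000000000:ℝ) ≤ Real.exp (35355339/50000000) := by
    have h := Real.sum_le_exp_of_nonneg (x := (35355339/50000000 : ℝ)) (by norm_num) 10
    norm_num [Finset.sum_range_succ, Nat.factorial] at h
    exact le_trans (by norm_num) h
  calc Real.exp (-Real.sqrt 2) ≤ Real.exp (-(35355339/25000000)) := by
        apply Real.exp_le_exp.mpr; linarith [sqrt2_lb]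
    _ ≤ 12155836861/50000000000 := by
        rw [Real.exp_neg, inv_le_comm₀ (Real.exp_pos _) (by norm_num),
          show (35355339/25000000:ℝ) = 35355339/50000000 + 35355339/50000000 by norm_num,
          Real.exp_add]
        nlinarith [hS, Real.exp_pos (35355339/50000000 : ℝ)]

lemma expA_lb : (24311673251/100000000000 : ℝ) ≤ Real.exp (-Real.sqrt 2) := by
  have hU : Real.exp (141421357/200000000) ≤ (101405749483/50000000000:ℝ) := by
    have h := Real.exp_bound' (x := (141421357/200000000 : ℝ)) (by norm_num) (by norm_num)
      (n := 10) (by norm_num)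
    norm_num [Finset.sum_range_succ, Nat.factorial] at h
    exact le_trans h (by norm_num)
  calc (24311673251/100000000000 : ℝ)
      ≤ Real.exp (-(141421357/100000000)) := by
        rw [Real.exp_neg, le_inv_comm₀ (by norm_num) (Real.exp_pos _),
          show (141421357/100000000:ℝ) = 141421357/200000000 + 141421357/200000000 by norm_num,
          Real.exp_add]
        nlinarith [hU, Real.exp_pos (141421357/200000000 : ℝ)]
    _ ≤ Real.exp (-Real.sqrt 2) := by apply Real.exp_le_exp.mpr; linarith [sqrt2_ub]

lemma expE_ub : Real.exp (-Real.sqrt 5) ≤ 2671948167/25000000000 := by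
  have hS : (437238105199/250000000000:ℝ) ≤ Real.exp (223606797/400000000) := by
    have h := Real.sum_le_exp_of_nonneg (x := (223606797/400000000 : ℝ)) (by norm_num) 10
    norm_num [Finset.sum_range_succ, Nat.factorial] at h
    exact le_trans (by norm_num) h
  have h2 : ((437238105199/250000000000:ℝ))^2 ≤ Real.exp (223606797/200000000) := by
    rw [show (223606797/200000000:ℝ) = 223606797/400000000 + 223606797/400000000 by norm_num,
      Real.exp_add]
    nlinarith [hS, Real.exp_pos (223606797/400000000 : ℝ)]
  calc Real.exp (-Real.sqrt 5) ≤ Real.exp (-(223606797/100000000)) := by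
        apply Real.exp_le_exp.mpr; linarith [sqrt5_lb]
    _ ≤ 2671948167/25000000000 := by
        rw [Real.exp_neg, inv_le_comm₀ (Real.exp_pos _) (by norm_num),
          show (223606797/100000000:ℝ) = 223606797/200000000 + 223606797/200000000 by norm_num,
          Real.exp_add]
        nlinarith [h2, Real.exp_pos (223606797/200000000 : ℝ)]

lemma expE_lb : (5343896269/50000000000 : ℝ) ≤ Real.exp (-Real.sqrt 5) := by
  have hU : Real.exp (111803399/200000000) ≤ (1748952426073/1000000000000:ℝ) := by
    have h := Real.exp_bound' (x := (111803399/200000000 : ℝ)) (by norm_num) (by norm_num)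
      (n := 10) (by norm_num)
    norm_num [Finset.sum_range_succ, Nat.factorial] at h
    exact le_trans h (by norm_num)
  have h2 : Real.exp (111803399/100000000) ≤ ((1748952426073/1000000000000:ℝ))^2 := by
    rw [show (111803399/100000000:ℝ) = 111803399/200000000 + 111803399/200000000 by norm_num,
      Real.exp_add]
    nlinarith [hU, Real.exp_pos (111803399/200000000 : ℝ)]
  calc (5343896269/50000000000 : ℝ)
      ≤ Real.exp (-(111803399/50000000)) := by
        rw [Real.exp_neg, le_inv_comm₀ (by norm_num) (Real.exp_pos _),
          show (111803399/50000000:ℝ) = 111803399/100000000 + 111803399/100000000 by norm_num,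
          Real.exp_add]
        nlinarith [h2, Real.exp_pos (111803399/100000000 : ℝ)]
    _ ≤ Real.exp (-Real.sqrt 5) := by apply Real.exp_le_exp.mpr; linarith [sqrt5_ub]

lemma expC_ub : Real.exp (-1 : ℝ) ≤ 919698603/2500000000 := le_of_lt (by
  have := Real.exp_neg_one_lt_d9; norm_num at this ⊢; linarith)

lemma expC_lb : (9196986029/25000000000 : ℝ) ≤ Real.exp (-1 : ℝ) := le_of_lt (by
  have := Real.exp_neg_one_gt_d9; norm_num at this ⊢; linarith)


lemma inv2 (a : ℝ) (hD : (1 - a^2) ≠ 0) :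
    ∑ i, ∑ j, (!![1, a; a, 1] : Matrix (Fin 2) (Fin 2) ℝ)⁻¹ i j = (2 - 2*a)/(1 - a^2) := by
  rw [magHelper _ ![(1 - a)/(1 - a^2), (1 - a)/(1 - a^2)]]
  · rw [Fin.sum_univ_two]
    simp only [Matrix.cons_val_zero, Matrix.cons_val_one, Matrix.head_cons,
      Matrix.cons_val_two, Matrix.tail_cons, Matrix.cons_val_three]
    field_simp
    ring
  · have h : (!![1, a; a, 1] : Matrix (Fin 2) (Fin 2) ℝ).det = (1 - a^2) := by
      norm_num [Matrix.det_fin_two]; ring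
    rw [h]; exact hD
  · funext i
    fin_cases i <;>
      · simp only [Matrix.mulVec, dotProduct, Fin.sum_univ_two, Matrix.cons_val_zero,
          Matrix.cons_val_one, Matrix.head_cons, Matrix.cons_val_two, Matrix.tail_cons,
          Matrix.cons_val_three, Matrix.cons_val', Matrix.head_fin_const, Matrix.empty_val',
          Matrix.cons_val_fin_one, Matrix.of_apply, Fin.isValue, Fin.reduceFinMk, Matrix.cons_val]
        field_simp
        ring

lemma inv3a (a c : ℝ) (hD : (1 - c^4 - 2*a^2 + 2*a^2*c^2) ≠ 0) :
    ∑ i, ∑ j, (!![1, a, c^2; a, 1, a; c^2, a, 1] : Matrix (Fin 3) (Fin 3) ℝ)⁻¹ i j = (3 - 2*c^2 - c^4 - 4*a + 4*a*c^2)/(1 - c^4 - 2*a^2 + 2*a^2*c^2) := by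
  rw [magHelper _ ![(1 - c^2 - a + a*c^2)/(1 - c^4 - 2*a^2 + 2*a^2*c^2), (1 - c^4 - 2*a + 2*a*c^2)/(1 - c^4 - 2*a^2 + 2*a^2*c^2), (1 - c^2 - a + a*c^2)/(1 - c^4 - 2*a^2 + 2*a^2*c^2)]]
  · rw [Fin.sum_univ_three]
    simp only [Matrix.cons_val_zero, Matrix.cons_val_one, Matrix.head_cons,
      Matrix.cons_val_two, Matrix.tail_cons, Matrix.cons_val_three]
    field_simp
    ring
  · have h : (!![1, a, c^2; a, 1, a; c^2, a, 1] : Matrix (Fin 3) (Fin 3) ℝ).det = (1 - c^4 - 2*a^2 + 2*a^2*c^2) := by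
      simp [Matrix.det_fin_three]; ring
    rw [h]; exact hD
  · funext i
    fin_cases i <;>
      · simp only [Matrix.mulVec, dotProduct, Fin.sum_univ_three, Matrix.cons_val_zero,
          Matrix.cons_val_one, Matrix.head_cons, Matrix.cons_val_two, Matrix.tail_cons,
          Matrix.cons_val_three, Matrix.cons_val', Matrix.head_fin_const, Matrix.empty_val',
          Matrix.cons_val_fin_one, Matrix.of_apply, Fin.isValue, Fin.reduceFinMk, Matrix.cons_val]
        field_simp
        rw [div_eq_one_iff_eq (by convert hD using 1; ring)]
        ring

lemma inv3b (a c e : ℝ) (hD : (1 - e^2 - c^2 + 2*a*c*e - a^2) ≠ 0) :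
    ∑ i, ∑ j, (!![1, a, c; a, 1, e; c, e, 1] : Matrix (Fin 3) (Fin 3) ℝ)⁻¹ i j = (3 - 2*e - e^2 - 2*c + 2*c*e - c^2 - 2*a + 2*a*e + 2*a*c - a^2)/(1 - e^2 - c^2 + 2*a*c*e - a^2) := by
  rw [magHelper _ ![(1 - e^2 - c + c*e - a + a*e)/(1 - e^2 - c^2 + 2*a*c*e - a^2), (1 - e + c*e - c^2 - a + a*c)/(1 - e^2 - c^2 + 2*a*c*e - a^2), (1 - e - c + a*e + a*c - a^2)/(1 - e^2 - c^2 + 2*a*c*e - a^2)]]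
  · rw [Fin.sum_univ_three]
    simp only [Matrix.cons_val_zero, Matrix.cons_val_one, Matrix.head_cons,
      Matrix.cons_val_two, Matrix.tail_cons, Matrix.cons_val_three]
    field_simp
    ring
  · have h : (!![1, a, c; a, 1, e; c, e, 1] : Matrix (Fin 3) (Fin 3) ℝ).det = (1 - e^2 - c^2 + 2*a*c*e - a^2) := by
      simp [Matrix.det_fin_three]; ring
    rw [h]; exact hD
  · funext i
    fin_cases i <;>
      · simp only [Matrix.mulVec, dotProduct, Fin.sum_univ_three, Matrix.cons_val_zero,
          Matrix.cons_val_one, Matrix.head_cons, Matrix.cons_val_two, Matrix.tail_cons,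
          Matrix.cons_val_three, Matrix.cons_val', Matrix.head_fin_const, Matrix.empty_val',
          Matrix.cons_val_fin_one, Matrix.of_apply, Fin.isValue, Fin.reduceFinMk, Matrix.cons_val]
        field_simp
        rw [div_eq_one_iff_eq (by convert hD using 1; ring)]
        ring

lemma inv4 (a c e : ℝ) (hD : (1 - e^2 - c^2 - c^4 + c^4*e^2 + c^6 + 2*a*c*e - 2*a*c^5*e - 2*a^2 + 3*a^2*c^2 - 2*a^2*c^4 + a^2*c^6) ≠ 0) :
    ∑ i, ∑ j, (!![1, a, c^2, c; a, 1, a, e; c^2, a, 1, c^3; c, e, c^3, 1] : Matrix (Fin 4) (Fin 4) ℝ)⁻¹ i j = (4 - 2*e - 2*e^2 - 2*c + 2*c*e - 4*c^2 + 2*c^2*e^2 + 2*c^4*e + 2*c^5 - 2*c^5*e - 4*a + 4*a*e + 2*a*c + 6*a*c^2 - 4*a*c^2*e - 4*a*c^4 - 2*a*c^5 + 2*a*c^6 - 2*a^2 + 2*a^2*c^2)/(1 - e^2 - c^2 - c^4 + c^4*e^2 + c^6 + 2*a*c*e - 2*a*c^5*e - 2*a^2 + 3*a^2*c^2 - 2*a^2*c^4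 + a^2*c^6) := by
  rw [magHelper _ ![(1 - e^2 - c + c*e - c^2 + c^2*e^2 + c^4 + c^5 - c^5*e - c^6 - a + a*e - a*c*e + a*c^2 - a*c^2*e + a*c^3*e - a*c^4 + a*c^6 + a^2*c - a^2*c^3)/(1 - e^2 - c^2 - c^4 + c^4*e^2 + c^6 + 2*a*c*e - 2*a*c^5*e - 2*a^2 + 3*a^2*c^2 - 2*a^2*c^4 + a^2*c^6), (1 - e + c*e - c^2 - c^4 + c^4*e - c^5*e + c^6 - 2*a + a*c + 3*a*c^2 - 2*a*c^4 - a*c^5 + a*c^6)/(1 - e^2 - c^2 - c^4 + c^4*e^2 + c^6 + 2*a*c*e - 2*a*c^5*e - 2*a^2 + 3*a^2*c^2 - 2*a^2*c^4 + a^2*c^6), (1 - e^2 - 2*c^2 + c^2*e^2 + c^4 - a + a*e + a*c*e + 2*a*c^2 - a*c^2*e - a*c^3*e - a*c^4 - a^2*c + a^2*c^3)/(1 - e^2 - c^2 - c^4 + c^4*e^2 + c^6 + 2*a*c*e - 2*a*c^5*e - 2*a^2 + 3*a^2*c^2 - 2*a^2*c^4 + a^2*c^6), (1 - e - c - c^4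 + c^4*e + c^5 + 2*a*e + a*c - 2*a*c^2*e - a*c^5 - 2*a^2 + 2*a^2*c^2)/(1 - e^2 - c^2 - c^4 + c^4*e^2 + c^6 + 2*a*c*e - 2*a*c^5*e - 2*a^2 + 3*a^2*c^2 - 2*a^2*c^4 + a^2*c^6)]]
  · rw [Fin.sum_univ_four]
    simp only [Matrix.cons_val_zero, Matrix.cons_val_one, Matrix.head_cons,
      Matrix.cons_val_two, Matrix.tail_cons, Matrix.cons_val_three]
    field_simp
    ring
  · have h : (!![1, a, c^2, c; a, 1, a, e; c^2, a, 1, c^3; c, e, c^3, 1] : Matrix (Fin 4) (Fin 4) ℝ).det = (1 - e^2 - c^2 - c^4 + c^4*e^2 + c^6 + 2*a*c*e - 2*a*c^5*e - 2*a^2 + 3*a^2*c^2 - 2*a^2*c^4 + a^2*c^6) := by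
      simp [Matrix.det_succ_row_zero, Fin.sum_univ_succ, Fin.succAbove]; ring
    rw [h]; exact hD
  · funext i
    fin_cases i <;>
      · simp only [Matrix.mulVec, dotProduct, Fin.sum_univ_four, Matrix.cons_val_zero,
          Matrix.cons_val_one, Matrix.head_cons, Matrix.cons_val_two, Matrix.tail_cons,
          Matrix.cons_val_three, Matrix.cons_val', Matrix.head_fin_const, Matrix.empty_val',
          Matrix.cons_val_fin_one, Matrix.of_apply, Fin.isValue, Fin.reduceFinMk, Matrix.cons_val]
        field_simp
        rw [div_eq_one_iff_eq (by convert hD using 1; ring)]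
        ring

lemma mainIneq (a c e : ℝ) (ha0 : 0 < a) (hc0 : 0 < c) (he0 : 0 < e) (haL : (24311673251/100000000000:ℝ) ≤ a) (haU : a ≤ (12155836861/50000000000:ℝ)) (hcL : (9196986029/25000000000:ℝ) ≤ c) (hcU : c ≤ (919698603/2500000000:ℝ)) (heL : (5343896269/50000000000:ℝ) ≤ e) (heU : e ≤ (2671948167/25000000000:ℝ)) :
    0 < (1 - c^4 - 2*a^2 + 2*a^2*c^2) ∧ 0 < (1 - e^2 - c^2 + 2*a*c*e - a^2) ∧ 0 < (1 - e^2 - c^2 - c^4 + c^4*e^2 + c^6 + 2*a*c*e - 2*a*c^5*e - 2*a^2 + 3*a^2*c^2 - 2*a^2*c^4 + a^2*c^6) ∧ 0 < (1 - a^2) ∧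
      (3 - 2*c^2 - c^4 - 4*a + 4*a*c^2)/(1 - c^4 - 2*a^2 + 2*a^2*c^2) + (3 - 2*e - e^2 - 2*c + 2*c*e - c^2 - 2*a + 2*a*e + 2*a*c - a^2)/(1 - e^2 - c^2 + 2*a*c*e - a^2) < (4 - 2*e - 2*e^2 - 2*c + 2*c*e - 4*c^2 + 2*c^2*e^2 + 2*c^4*e + 2*c^5 - 2*c^5*e - 4*a + 4*a*e + 2*a*c + 6*a*c^2 - 4*a*c^2*e - 4*a*c^4 - 2*a*c^5 + 2*a*c^6 - 2*a^2 + 2*a^2*c^2)/(1 - e^2 - c^2 - c^4 + c^4*e^2 + c^6 + 2*a*c*e - 2*a*c^5*e - 2*a^2 + 3*a^2*c^2 - 2*a^2*c^4 + a^2*c^6) + (2 - 2*a)/(1 - a^2) := by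
  have hU1 : e^2 ≤ (114228913/10000000000:ℝ) := by
    calc e^2 ≤ (2671948167/25000000000:ℝ)^2 := by gcongr <;> assumption
      _ ≤ (114228913/10000000000:ℝ) := by norm_num
  have hL1 : (114228909/10000000000:ℝ) ≤ e^2 := by
    calc (114228909/10000000000:ℝ) ≤ (5343896269/50000000000:ℝ)^2 := by norm_num
      _ ≤ e^2 := by gcongr <;> assumption
  have hU3 : c*e ≤ (2457387/62500000:ℝ) := by
    calc c*e ≤ (919698603/2500000000:ℝ)*(2671948167/25000000000:ℝ) := by gcongr <;> assumption
      _ ≤ (2457387/62500000:ℝ) := by norm_num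
  have hL3 : (196590957/5000000000:ℝ) ≤ c*e := by
    calc (196590957/5000000000:ℝ) ≤ (9196986029/25000000000:ℝ)*(5343896269/50000000000:ℝ) := by norm_num
      _ ≤ c*e := by gcongr <;> assumption
  have hU4 : c^2 ≤ (1353352833/10000000000:ℝ) := by
    calc c^2 ≤ (919698603/2500000000:ℝ)^2 := by gcongr <;> assumption
      _ ≤ (1353352833/10000000000:ℝ) := by norm_num
  have hL4 : (10573069/78125000:ℝ) ≤ c^2 := by
    calc (10573069/78125000:ℝ) ≤ (9196986029/25000000000:ℝ)^2 := by norm_num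
      _ ≤ c^2 := by gcongr <;> assumption
  have hU5 : c^2*e^2 ≤ (15459203/10000000000:ℝ) := by
    calc c^2*e^2 ≤ (919698603/2500000000:ℝ)^2*(2671948167/25000000000:ℝ)^2 := by gcongr <;> assumption
      _ ≤ (15459203/10000000000:ℝ) := by norm_num
  have hL5 : (15459201/10000000000:ℝ) ≤ c^2*e^2 := by
    calc (15459201/10000000000:ℝ) ≤ (9196986029/25000000000:ℝ)^2*(5343896269/50000000000:ℝ)^2 := by norm_num
      _ ≤ c^2*e^2 := by gcongr <;> assumption
  have hU6 : c^4 ≤ (183156389/10000000000:ℝ) := by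
    calc c^4 ≤ (919698603/2500000000:ℝ)^4 := by gcongr <;> assumption
      _ ≤ (183156389/10000000000:ℝ) := by norm_num
  have hL6 : (45789097/2500000000:ℝ) ≤ c^4 := by
    calc (45789097/2500000000:ℝ) ≤ (9196986029/25000000000:ℝ)^4 := by norm_num
      _ ≤ c^4 := by gcongr <;> assumption
  have hU7 : c^4*e ≤ (1223461/625000000:ℝ) := by
    calc c^4*e ≤ (919698603/2500000000:ℝ)^4*(2671948167/25000000000:ℝ) := by gcongr <;> assumption
      _ ≤ (1223461/625000000:ℝ) := by norm_num
  have hL7 : (9787687/5000000000:ℝ) ≤ c^4*e := by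
    calc (9787687/5000000000:ℝ) ≤ (9196986029/25000000000:ℝ)^4*(5343896269/50000000000:ℝ) := by norm_num
      _ ≤ c^4*e := by gcongr <;> assumption
  have hU8 : c^4*e^2 ≤ (130761/625000000:ℝ) := by
    calc c^4*e^2 ≤ (919698603/2500000000:ℝ)^4*(2671948167/25000000000:ℝ)^2 := by gcongr <;> assumption
      _ ≤ (130761/625000000:ℝ) := by norm_num
  have hL8 : (83687/400000000:ℝ) ≤ c^4*e^2 := by
    calc (83687/400000000:ℝ) ≤ (9196986029/25000000000:ℝ)^4*(5343896269/50000000000:ℝ)^2 := by norm_num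
      _ ≤ c^4*e^2 := by gcongr <;> assumption
  have hU9 : c^5 ≤ (67379471/10000000000:ℝ) := by
    calc c^5 ≤ (919698603/2500000000:ℝ)^5 := by gcongr <;> assumption
      _ ≤ (67379471/10000000000:ℝ) := by norm_num
  have hL9 : (67379469/10000000000:ℝ) ≤ c^5 := by
    calc (67379469/10000000000:ℝ) ≤ (9196986029/25000000000:ℝ)^5 := by norm_num
      _ ≤ c^5 := by gcongr <;> assumption
  have hU10 : c^5*e ≤ (7201379/10000000000:ℝ) := by
    calc c^5*e ≤ (919698603/2500000000:ℝ)^5*(2671948167/25000000000:ℝ) := by gcongr <;> assumption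
      _ ≤ (7201379/10000000000:ℝ) := by norm_num
  have hL10 : (7201377/10000000000:ℝ) ≤ c^5*e := by
    calc (7201377/10000000000:ℝ) ≤ (9196986029/25000000000:ℝ)^5*(5343896269/50000000000:ℝ) := by norm_num
      _ ≤ c^5*e := by gcongr <;> assumption
  have hU11 : c^6 ≤ (12393761/5000000000:ℝ) := by
    calc c^6 ≤ (919698603/2500000000:ℝ)^6 := by gcongr <;> assumption
      _ ≤ (12393761/5000000000:ℝ) := by norm_num
  have hL11 : (24787521/10000000000:ℝ) ≤ c^6 := by
    calc (24787521/10000000000:ℝ) ≤ (9196986029/25000000000:ℝ)^6 := by norm_num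
      _ ≤ c^6 := by gcongr <;> assumption
  have hU13 : a*e ≤ (259838129/10000000000:ℝ) := by
    calc a*e ≤ (12155836861/50000000000:ℝ)*(2671948167/25000000000:ℝ) := by gcongr <;> assumption
      _ ≤ (259838129/10000000000:ℝ) := by norm_num
  have hL13 : (259838119/10000000000:ℝ) ≤ a*e := by
    calc (259838119/10000000000:ℝ) ≤ (24311673251/100000000000:ℝ)*(5343896269/50000000000:ℝ) := by norm_num
      _ ≤ a*e := by gcongr <;> assumption
  have hU14 : a*c ≤ (178875299/2000000000:ℝ) := by
    calc a*c ≤ (12155836861/50000000000:ℝ)*(919698603/2500000000:ℝ) := by gcongr <;> assumption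
      _ ≤ (178875299/2000000000:ℝ) := by norm_num
  have hL14 : (223594119/2500000000:ℝ) ≤ a*c := by
    calc (223594119/2500000000:ℝ) ≤ (24311673251/100000000000:ℝ)*(9196986029/25000000000:ℝ) := by norm_num
      _ ≤ a*c := by gcongr <;> assumption
  have hU15 : a*c*e ≤ (47794553/5000000000:ℝ) := by
    calc a*c*e ≤ (12155836861/50000000000:ℝ)*(919698603/2500000000:ℝ)*(2671948167/25000000000:ℝ) := by gcongr <;> assumption
      _ ≤ (47794553/5000000000:ℝ) := by norm_num
  have hL15 : (47794551/5000000000:ℝ) ≤ a*c*e := by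
    calc (47794551/5000000000:ℝ) ≤ (24311673251/100000000000:ℝ)*(9196986029/25000000000:ℝ)*(5343896269/50000000000:ℝ) := by norm_num
      _ ≤ a*c*e := by gcongr <;> assumption
  have hU16 : a*c^2 ≤ (13160909/400000000:ℝ) := by
    calc a*c^2 ≤ (12155836861/50000000000:ℝ)*(919698603/2500000000:ℝ)^2 := by gcongr <;> assumption
      _ ≤ (13160909/400000000:ℝ) := by norm_num
  have hL16 : (164511359/5000000000:ℝ) ≤ a*c^2 := by
    calc (164511359/5000000000:ℝ) ≤ (24311673251/100000000000:ℝ)*(9196986029/25000000000:ℝ)^2 := by norm_num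
      _ ≤ a*c^2 := by gcongr <;> assumption
  have hU17 : a*c^2*e ≤ (35165267/10000000000:ℝ) := by
    calc a*c^2*e ≤ (12155836861/50000000000:ℝ)*(919698603/2500000000:ℝ)^2*(2671948167/25000000000:ℝ) := by gcongr <;> assumption
      _ ≤ (35165267/10000000000:ℝ) := by norm_num
  have hL17 : (7033053/2000000000:ℝ) ≤ a*c^2*e := by
    calc (7033053/2000000000:ℝ) ≤ (24311673251/100000000000:ℝ)*(9196986029/25000000000:ℝ)^2*(5343896269/50000000000:ℝ) := by norm_num
      _ ≤ a*c^2*e := by gcongr <;> assumption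
  have hU18 : a*c^4 ≤ (173939/39062500:ℝ) := by
    calc a*c^4 ≤ (12155836861/50000000000:ℝ)*(919698603/2500000000:ℝ)^4 := by gcongr <;> assumption
      _ ≤ (173939/39062500:ℝ) := by norm_num
  have hL18 : (22264191/5000000000:ℝ) ≤ a*c^4 := by
    calc (22264191/5000000000:ℝ) ≤ (24311673251/100000000000:ℝ)*(9196986029/25000000000:ℝ)^4 := by norm_num
      _ ≤ a*c^4 := by gcongr <;> assumption
  have hU19 : a*c^5 ≤ (16381077/10000000000:ℝ) := by
    calc a*c^5 ≤ (12155836861/50000000000:ℝ)*(919698603/2500000000:ℝ)^5 := by gcongr <;> assumption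
      _ ≤ (16381077/10000000000:ℝ) := by norm_num
  have hL19 : (4095269/2500000000:ℝ) ≤ a*c^5 := by
    calc (4095269/2500000000:ℝ) ≤ (24311673251/100000000000:ℝ)*(9196986029/25000000000:ℝ)^5 := by norm_num
      _ ≤ a*c^5 := by gcongr <;> assumption
  have hU20 : a*c^5*e ≤ (218847/1250000000:ℝ) := by
    calc a*c^5*e ≤ (12155836861/50000000000:ℝ)*(919698603/2500000000:ℝ)^5*(2671948167/25000000000:ℝ) := by gcongr <;> assumption
      _ ≤ (218847/1250000000:ℝ) := by norm_num
  have hL20 : (70031/400000000:ℝ) ≤ a*c^5*e := by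
    calc (70031/400000000:ℝ) ≤ (24311673251/100000000000:ℝ)*(9196986029/25000000000:ℝ)^5*(5343896269/50000000000:ℝ) := by norm_num
      _ ≤ a*c^5*e := by gcongr <;> assumption
  have hU21 : a*c^6 ≤ (3013131/5000000000:ℝ) := by
    calc a*c^6 ≤ (12155836861/50000000000:ℝ)*(919698603/2500000000:ℝ)^6 := by gcongr <;> assumption
      _ ≤ (3013131/5000000000:ℝ) := by norm_num
  have hL21 : (6026261/10000000000:ℝ) ≤ a*c^6 := by
    calc (6026261/10000000000:ℝ) ≤ (24311673251/100000000000:ℝ)*(9196986029/25000000000:ℝ)^6 := by norm_num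
      _ ≤ a*c^6 := by gcongr <;> assumption
  have hU22 : a^2 ≤ (14776437/250000000:ℝ) := by
    calc a^2 ≤ (12155836861/50000000000:ℝ)^2 := by gcongr <;> assumption
      _ ≤ (14776437/250000000:ℝ) := by norm_num
  have hL22 : (36941091/625000000:ℝ) ≤ a^2 := by
    calc (36941091/625000000:ℝ) ≤ (24311673251/100000000000:ℝ)^2 := by norm_num
      _ ≤ a^2 := by gcongr <;> assumption
  have hU23 : a^2*c^2 ≤ (19997733/2500000000:ℝ) := by
    calc a^2*c^2 ≤ (12155836861/50000000000:ℝ)^2*(919698603/2500000000:ℝ)^2 := by gcongr <;> assumption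
      _ ≤ (19997733/2500000000:ℝ) := by norm_num
  have hL23 : (4999433/625000000:ℝ) ≤ a^2*c^2 := by
    calc (4999433/625000000:ℝ) ≤ (24311673251/100000000000:ℝ)^2*(9196986029/25000000000:ℝ)^2 := by norm_num
      _ ≤ a^2*c^2 := by gcongr <;> assumption
  have hU24 : a^2*c^4 ≤ (2706399/2500000000:ℝ) := by
    calc a^2*c^4 ≤ (12155836861/50000000000:ℝ)^2*(919698603/2500000000:ℝ)^4 := by gcongr <;> assumption
      _ ≤ (2706399/2500000000:ℝ) := by norm_num
  have hL24 : (5412797/5000000000:ℝ) ≤ a^2*c^4 := by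
    calc (5412797/5000000000:ℝ) ≤ (24311673251/100000000000:ℝ)^2*(9196986029/25000000000:ℝ)^4 := by norm_num
      _ ≤ a^2*c^4 := by gcongr <;> assumption
  have hU25 : a^2*c^6 ≤ (732543/5000000000:ℝ) := by
    calc a^2*c^6 ≤ (12155836861/50000000000:ℝ)^2*(919698603/2500000000:ℝ)^6 := by gcongr <;> assumption
      _ ≤ (732543/5000000000:ℝ) := by norm_num
  have hL25 : (366271/2500000000:ℝ) ≤ a^2*c^6 := by
    calc (366271/2500000000:ℝ) ≤ (24311673251/100000000000:ℝ)^2*(9196986029/25000000000:ℝ)^6 := by norm_num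
      _ ≤ a^2*c^6 := by gcongr <;> assumption
  have hDL3a : (8794710507/10000000000:ℝ) ≤ (1 - c^4 - 2*a^2 + 2*a^2*c^2) := by linarith only [hL23, hU22, hU6]
  have hDH3a : (1 - c^4 - 2*a^2 + 2*a^2*c^2) ≤ (2198677641/2500000000:ℝ) := by linarith only [hL22, hL6, hU23]
  have hNL3a : (748062373/400000000:ℝ) ≤ (3 - 2*c^2 - c^4 - 4*a + 4*a*c^2) := by linarith only [hL16, hU4, hU6, haU]
  have hNH3a : (3 - 2*c^2 - c^4 - 4*a + 4*a*c^2) ≤ (4675389887/2500000000:ℝ) := by linarith only [hL4, hL6, hU16, haL]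

  have hDL3b : (4066269489/5000000000:ℝ) ≤ (1 - e^2 - c^2 + 2*a*c*e - a^2) := by linarith only [hL15, hU1, hU22, hU4]
  have hDH3b : (1 - e^2 - c^2 + 2*a*c*e - a^2) ≤ (1626507803/2000000000:ℝ) := by linarith only [hL1, hL22, hL4, hU15]
  have hNL3b : (2084833961/1250000000:ℝ) ≤ (3 - 2*e - e^2 - 2*c + 2*c*e - c^2 - 2*a + 2*a*e + 2*a*c - a^2) := by linarith only [hL13, hL14, hL3, hU1, hU22, hU4, haU, hcU, heU]
  have hNH3b : (3 - 2*e - e^2 - 2*c + 2*c*e - c^2 - 2*a + 2*a*e + 2*a*c - a^2) ≤ (16678671913/10000000000:ℝ) := by linarith only [hL1, hL22, hL4, hU13, hU14, hU3, haL, hcL, heL]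

  have hDL4 : (7601489929/10000000000:ℝ) ≤ (1 - e^2 - c^2 - c^4 + c^4*e^2 + c^6 + 2*a*c*e - 2*a*c^5*e - 2*a^2 + 3*a^2*c^2 - 2*a^2*c^4 + a^2*c^6) := by linarith only [hL11, hL15, hL23, hL25, hL8, hU1, hU20, hU22, hU24, hU4, hU6]
  have hDH4 : (1 - e^2 - c^2 - c^4 + c^4*e^2 + c^6 + 2*a*c*e - 2*a*c^5*e - 2*a^2 + 3*a^2*c^2 - 2*a^2*c^4 + a^2*c^6) ≤ (7601490013/10000000000:ℝ) := by linarith only [hL1, hL20, hL22, hL24, hL4, hL6, hU11, hU15, hU23, hU25, hU8]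
  have hNL4 : (9777863773/5000000000:ℝ) ≤ (4 - 2*e - 2*e^2 - 2*c + 2*c*e - 4*c^2 + 2*c^2*e^2 + 2*c^4*e + 2*c^5 - 2*c^5*e - 4*a + 4*a*e + 2*a*c + 6*a*c^2 - 4*a*c^2*e - 4*a*c^4 - 2*a*c^5 + 2*a*c^6 - 2*a^2 + 2*a^2*c^2) := by linarith only [hL13, hL14, hL16, hL21, hL23, hL3, hL5, hL7, hL9, hU1, hU10, hU17, hU18, hU19, hU22, hU4, haU, hcU, heU]
  have hNH4 : (4 - 2*e - 2*e^2 - 2*c + 2*c*e - 4*c^2 + 2*c^2*e^2 + 2*c^4*e + 2*c^5 - 2*c^5*e - 4*a + 4*a*e + 2*a*c + 6*a*c^2 - 4*a*c^2*e - 4*a*c^4 - 2*a*c^5 + 2*a*c^6 - 2*a^2 + 2*a^2*c^2) ≤ (4888932001/2500000000:ℝ) := by linarith only [hL1, hL10, hL17, hL18, hL19, hL22, hL4, hU13, hU14, hU16, hU21, hU23, hU3, hU5, hU7, hU9, haL, hcL, heL]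

  have hDL2 : (235223563/250000000:ℝ) ≤ (1 - a^2) := by linarith only [hU22]
  have hDH2 : (1 - a^2) ≤ (588058909/625000000:ℝ) := by linarith only [hL22]
  have hNL2 : (7568832627/5000000000:ℝ) ≤ (2 - 2*a) := by linarith only [haU]
  have hNH2 : (2 - 2*a) ≤ (302753307/200000000:ℝ) := by linarith only [haL]

  have p3a : (0:ℝ) < (1 - c^4 - 2*a^2 + 2*a^2*c^2) := by linarith only [hDL3a]
  have p3b : (0:ℝ) < (1 - e^2 - c^2 + 2*a*c*e - a^2) := by linarith only [hDL3b]
  have p4 : (0:ℝ) < (1 - e^2 - c^2 - c^4 + c^4*e^2 + c^6 + 2*a*c*e - 2*a*c^5*e - 2*a^2 + 3*a^2*c^2 - 2*a^2*c^4 + a^2*c^6) := by linarith only [hDL4]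
  have p2 : (0:ℝ) < (1 - a^2) := by linarith only [hDL2]
  refine ⟨p3a, p3b, p4, p2, ?_⟩
  have u3a : (3 - 2*c^2 - c^4 - 4*a + 4*a*c^2)/(1 - c^4 - 2*a^2 + 2*a^2*c^2) ≤ (2126455389/1000000000:ℝ) := by rw [div_le_iff₀ p3a]; linarith only [hNH3a, hDL3a]
  have u3b : (3 - 2*e - e^2 - 2*c + 2*c*e - c^2 - 2*a + 2*a*e + 2*a*c - a^2)/(1 - e^2 - c^2 + 2*a*c*e - a^2) ≤ (512714171/250000000:ℝ) := by rw [div_le_iff₀ p3b]; linarith only [hNH3b, hDL3b]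
  have l4 : (321577209/125000000:ℝ) ≤ (4 - 2*e - 2*e^2 - 2*c + 2*c*e - 4*c^2 + 2*c^2*e^2 + 2*c^4*e + 2*c^5 - 2*c^5*e - 4*a + 4*a*e + 2*a*c + 6*a*c^2 - 4*a*c^2*e - 4*a*c^4 - 2*a*c^5 + 2*a*c^6 - 2*a^2 + 2*a^2*c^2)/(1 - e^2 - c^2 - c^4 + c^4*e^2 + c^6 + 2*a*c*e - 2*a*c^5*e - 2*a^2 + 3*a^2*c^2 - 2*a^2*c^4 + a^2*c^6) := by rw [le_div_iff₀ p4]; linarith only [hNL4, hDH4]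
  have l2 : (1608859357/1000000000:ℝ) ≤ (2 - 2*a)/(1 - a^2) := by rw [le_div_iff₀ p2]; linarith only [hNL2, hDH2]
  linarith only [u3a, u3b, l4, l2]

/-- Magnitude is not submodular on finite Euclidean point sets:
`Mag(X ∪ {x₁}) + Mag(X ∪ {x₂}) < Mag(X ∪ {x₁, x₂}) + Mag(X)` for
`X = {(1,0),(0,1)}`, `x₁ = (-1,0)`, `x₂ = (2,0)`. -/
theorem stmt4 :
    Mag ![((1 : ℝ), (0 : ℝ)), (0, 1), (-1, 0)] + Mag ![((1 : ℝ), (0 : ℝ)), (0, 1), (2, 0)] <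
      Mag ![((1 : ℝ), (0 : ℝ)), (0, 1), (-1, 0), (2, 0)] + Mag ![((1 : ℝ), (0 : ℝ)), (0, 1)] := by
  have s4 : Real.sqrt 4 = 2 := by
    rw [show (4:ℝ) = 2^2 by norm_num, Real.sqrt_sq (by norm_num : (0:ℝ) ≤ 2)]
  have s9 : Real.sqrt 9 = 3 := by
    rw [show (9:ℝ) = 3^2 by norm_num, Real.sqrt_sq (by norm_num : (0:ℝ) ≤ 3)]
  have hexp2 : Real.exp (-2 : ℝ) = Real.exp (-1)^2 := by
    rw [show (-2:ℝ) = -1 + -1 by norm_num, Real.exp_add]; ring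
  have hexp3 : Real.exp (-3 : ℝ) = Real.exp (-1)^3 := by
    rw [show (-3:ℝ) = -1 + -1 + -1 by norm_num, Real.exp_add, Real.exp_add]; ring
  have hm3a : Mag ![((1 : ℝ), (0 : ℝ)), (0, 1), (-1, 0)] = ∑ i, ∑ j, ((!![1, Real.exp (-Real.sqrt 2), Real.exp (-1)^2; Real.exp (-Real.sqrt 2), 1, Real.exp (-Real.sqrt 2); Real.exp (-1)^2, Real.exp (-Real.sqrt 2), 1]) : Matrix (Fin 3) (Fin 3) ℝ)⁻¹ i j := by
    apply magOf
    intro i j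
    fin_cases i <;> fin_cases j <;> norm_num [s4, s9, hexp2, hexp3]
  have hm3b : Mag ![((1 : ℝ), (0 : ℝ)), (0, 1), (2, 0)] = ∑ i, ∑ j, ((!![1, Real.exp (-Real.sqrt 2), Real.exp (-1); Real.exp (-Real.sqrt 2), 1, Real.exp (-Real.sqrt 5); Real.exp (-1), Real.exp (-Real.sqrt 5), 1]) : Matrix (Fin 3) (Fin 3) ℝ)⁻¹ i j := by
    apply magOf
    intro i j
    fin_cases i <;> fin_cases j <;> norm_num [s4, s9, hexp2, hexp3]
  have hm4 : Mag ![((1 : ℝ), (0 : ℝ)), (0, 1), (-1, 0), (2, 0)] = ∑ i, ∑ j, ((!![1, Real.exp (-Real.sqrt 2), Real.exp (-1)^2, Real.exp (-1); Real.exp (-Real.sqrt 2), 1, Real.exp (-Real.sqrt 2), Real.exp (-Real.sqrt 5); Real.exp (-1)^2, Real.exp (-Real.sqrt 2), 1, Real.exp (-1)^3; Real.exp (-1), Real.exp (-Real.sqrt 5), Real.exp (-1)^3, 1]) : Matrix (Fin 4) (Fin 4) ℝ)⁻¹ i j := by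
    apply magOf
    intro i j
    fin_cases i <;> fin_cases j <;> norm_num [s4, s9, hexp2, hexp3]
  have hm2 : Mag ![((1 : ℝ), (0 : ℝ)), (0, 1)] = ∑ i, ∑ j, ((!![1, Real.exp (-Real.sqrt 2); Real.exp (-Real.sqrt 2), 1]) : Matrix (Fin 2) (Fin 2) ℝ)⁻¹ i j := by
    apply magOf
    intro i j
    fin_cases i <;> fin_cases j <;> norm_num [s4, s9, hexp2, hexp3]
  obtain ⟨p3a, p3b, p4, p2, hkey⟩ := mainIneq (Real.exp (-Real.sqrt 2)) (Real.exp (-1)) (Real.exp (-Real.sqrt 5))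
    (Real.exp_pos _) (Real.exp_pos _) (Real.exp_pos _)
    expA_lb expA_ub expC_lb expC_ub expE_lb expE_ub
  rw [hm3a, hm3b, hm4, hm2, inv3a _ _ (ne_of_gt p3a), inv3b _ _ _ (ne_of_gt p3b),
    inv4 _ _ _ (ne_of_gt p4), inv2 _ (ne_of_gt p2)]
  exact hkey
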